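/- Define K(x,t) = (x^t - x)/((t-1)(x-1)) · ((t-1)/t · (x^t-1)/(x^t-x))^t. Then for t > 1, the function x ↦ K(x,t) is monotone decreasing on (0,1) and monotone increasing on (1,∞), and K(x,t) ≥ 1 for all x > 0, x ≠ 1. -/

import Mathlib

/-- The generalized Kantorovich constant. -/
noncomputable def K (x t : ℝ) : ℝ :=
  ((x ^ t - x) / ((t - 1) * (x - 1))) * (((t - 1) / t) * ((x ^ t - 1) / (x ^ t - x))) ^ t

/-- Key structural lemma: `K x t` is the value of the secant-over-power function at its
critical point `s0`, and dominates `1 + a * (s - 1)` over `s ^ t` everywhere. -/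
lemma kantor_key (t : ℝ) (ht : 1 < t) (x : ℝ) (hx : 0 < x) (hx1 : x ≠ 1) :
    ∃ s0 : ℝ, 0 < s0 ∧
      K x t * s0 ^ t = 1 + (x ^ t - 1) / (x - 1) * (s0 - 1) ∧
      (∀ s : ℝ, 0 ≤ s → 1 + (x ^ t - 1) / (x - 1) * (s - 1) ≤ K x t * s ^ t) ∧
      (1 < x → 1 ≤ s0) ∧ (x < 1 → s0 ≤ 1) := by
  have ht0 : (0:ℝ) < t := by linarith
  have ht1 : (0:ℝ) < t - 1 := by linarith
  set X := x ^ t with hXdef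
  have hX0 : 0 < X := Real.rpow_pos_of_pos hx t
  -- sign facts
  have hsigns : (0 < (X - x) / ((t - 1) * (x - 1))) ∧ (0 < (X - 1) / (X - x)) := by
    rcases lt_or_gt_of_ne hx1 with h | h
    · have h1 : X < x := by
        have := Real.rpow_lt_rpow_of_exponent_gt hx h ht
        simpa [hXdef] using this.trans_eq (Real.rpow_one x)
      have h2 : X < 1 := by
        have : X < x := h1
        linarith
      constructor
      · apply div_pos_of_neg_of_neg (by linarith)
        exact mul_neg_of_pos_of_neg ht1 (by linarith)
      · exact div_pos_of_neg_of_neg (by linarith) (by linarith)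
    · have h1 : x < X := by
        have := Real.rpow_lt_rpow_of_exponent_lt h ht
        simpa [hXdef] using (Real.rpow_one x ▸ this :)
      have h2 : 1 < X := by linarith
      constructor
      · exact div_pos (by linarith) (mul_pos ht1 (by linarith))
      · exact div_pos (by linarith) (by linarith)
  obtain ⟨hc, hq⟩ := hsigns
  have hXx : X - x ≠ 0 := by
    intro h
    rw [h] at hq
    simp at hq
  have hX1 : X - 1 ≠ 0 := by
    intro h
    rw [h] at hq
    simp at hq
  have hx1' : x - 1 ≠ 0 := sub_ne_zero.mpr hx1
  set u : ℝ := ((t - 1) / t) * ((X - 1) / (X - x)) with hudef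
  have hu : 0 < u := mul_pos (div_pos ht1 ht0) hq
  set c : ℝ := (X - x) / ((t - 1) * (x - 1)) with hcdef
  have hK : K x t = c * u ^ t := rfl
  have hKpos : 0 < K x t := by
    rw [hK]; exact mul_pos hc (Real.rpow_pos_of_pos hu t)
  set s0 : ℝ := t * (X - x) / ((t - 1) * (X - 1)) with hs0def
  have hs0u : s0 * u = 1 := by
    rw [hs0def, hudef]; field_simp
  have hs0 : 0 < s0 := by
    by_contra h
    push_neg at h
    nlinarith [hs0u, hu]
  have hs0t : s0 ^ t * u ^ t = 1 := by
    rw [← Real.mul_rpow hs0.le hu.le, hs0u, Real.one_rpow]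
  set a : ℝ := (X - 1) / (x - 1) with hadef
  -- equality at s0 : K x t * s0 ^ t = c = 1 + a * (s0 - 1)
  have hEq : K x t * s0 ^ t = 1 + a * (s0 - 1) := by
    rw [hK]
    have : c * u ^ t * s0 ^ t = c := by
      rw [mul_assoc, mul_comm (u ^ t), hs0t, mul_one]
    rw [this, hcdef, hadef, hs0def]
    field_simp
    ring
  -- tangent slope identity : K x t * (t * s0 ^ (t-1)) = a
  have hTan : K x t * (t * s0 ^ (t - 1)) = a := by
    have h1 : s0 ^ (t - 1) = s0 ^ t / s0 := by
      rw [Real.rpow_sub hs0, Real.rpow_one]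
    rw [hK, h1]
    have h2 : c * u ^ t * (t * (s0 ^ t / s0)) = c * t * (u ^ t * s0 ^ t) / s0 := by
      ring
    have h3 : u ^ t * s0 ^ t = 1 := by rw [mul_comm]; exact hs0t
    rw [h2, h3, mul_one, hcdef, hadef, hs0def]
    have htne : t ≠ 0 := ne_of_gt ht0
    have ht1ne : t - 1 ≠ 0 := ne_of_gt ht1
    field_simp
  refine ⟨s0, hs0, by rw [hEq], ?_, ?_, ?_⟩
  · -- main inequality via Bernoulli
    intro s hs
    have hber : 1 + t * ((s - s0) / s0) ≤ (1 + (s - s0) / s0) ^ t := by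
      apply one_add_mul_self_le_rpow_one_add _ ht.le
      rw [neg_le, ← sub_nonneg]
      have : (1:ℝ) - -((s - s0)/s0) = s / s0 := by field_simp; ring
      rw [this]
      positivity
    have h1 : (1 : ℝ) + (s - s0) / s0 = s / s0 := by field_simp; ring
    rw [h1, Real.div_rpow hs hs0.le] at hber
    -- multiply by K x t * s0 ^ t > 0
    have hs0tpos : 0 < s0 ^ t := Real.rpow_pos_of_pos hs0 t
    have hmul := mul_le_mul_of_nonneg_left hber (le_of_lt (mul_pos hKpos hs0tpos))
    have hrhs : K x t * s0 ^ t * (s ^ t / s0 ^ t) = K x t * s ^ t := by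
      field_simp
    rw [hrhs] at hmul
    refine le_trans (le_of_eq ?_) hmul
    have h2 : K x t * s0 ^ t * (1 + t * ((s - s0) / s0)) 
        = K x t * s0 ^ t + (K x t * (t * s0 ^ (t-1))) * (s - s0) := by
      have h3 : s0 ^ (t - 1) = s0 ^ t / s0 := by
        rw [Real.rpow_sub hs0, Real.rpow_one]
      rw [h3]
      field_simp
    rw [h2, hEq, hTan]
    ring
  · -- x > 1 → 1 ≤ s0
    intro hx1lt
    have h1 : 1 < X := by
      rw [hXdef]
      exact Real.one_lt_rpow_iff_of_pos hx |>.mpr (Or.inl ⟨hx1lt, ht0⟩)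
    have hber : 1 + t * (x - 1) ≤ X := by
      have := one_add_mul_self_le_rpow_one_add (by linarith : (-1:ℝ) ≤ x - 1) ht.le
      simpa [hXdef] using this
    rw [hs0def, le_div_iff₀ (mul_pos ht1 (by linarith))]
    nlinarith
  · -- x < 1 → s0 ≤ 1
    intro hxlt
    have h1 : X < 1 := by
      rw [hXdef]
      exact Real.rpow_lt_one hx.le hxlt ht0
    have hber : 1 + t * (x - 1) ≤ X := by
      have := one_add_mul_self_le_rpow_one_add (by linarith : (-1:ℝ) ≤ x - 1) ht.le
      simpa [hXdef] using this
    rw [hs0def, div_le_one_iff]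
    right; right
    have hX1lt : X < x := by
      rw [hXdef]
      have h := Real.rpow_lt_rpow_of_exponent_gt hx hxlt ht
      simpa using h
    exact ⟨mul_neg_of_pos_of_neg ht1 (by linarith), by nlinarith⟩

lemma kantor_slope_le (t : ℝ) (ht : 1 < t) {x y : ℝ} (hx : 0 < x) (hx1 : x ≠ 1)
    (hy1 : y ≠ 1) (hxy : x ≤ y) :
    (x ^ t - 1) / (x - 1) ≤ (y ^ t - 1) / (y - 1) := by
  have hconv : ConvexOn ℝ (Set.Ici 0) fun z : ℝ => z ^ t := convexOn_rpow ht.le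
  have hm := hconv.slope_mono (Set.mem_Ici.mpr (by norm_num : (0:ℝ) ≤ 1))
  have hxmem : x ∈ Set.Ici (0:ℝ) \ {1} := ⟨le_of_lt hx, by simp [hx1]⟩
  have hymem : y ∈ Set.Ici (0:ℝ) \ {1} := ⟨by simp; linarith, by simp [hy1]⟩
  have h := hm hxmem hymem hxy
  simpa [slope_def_field, Real.one_rpow] using h

theorem K_monotone_of_one_lt_t (t : ℝ) (ht : 1 < t) :
    AntitoneOn (fun x => K x t) (Set.Ioo (0 : ℝ) 1) ∧
      MonotoneOn (fun x => K x t) (Set.Ioi (1 : ℝ)) ∧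
      ∀ x : ℝ, 0 < x → x ≠ 1 → 1 ≤ K x t := by
  refine ⟨?_, ?_, ?_⟩
  · -- antitone on (0,1)
    intro x hxm y hym hxy
    simp only
    obtain ⟨hx0, hxlt⟩ := hxm
    obtain ⟨hy0, hylt⟩ := hym
    obtain ⟨s0, hs0, hEqy, -, -, hle1⟩ := kantor_key t ht y hy0 (ne_of_lt hylt)
    obtain ⟨-, -, -, hIneqx, -, -⟩ := kantor_key t ht x hx0 (ne_of_lt hxlt)
    have hs01 : s0 ≤ 1 := hle1 hylt
    have hslope : (x ^ t - 1) / (x - 1) ≤ (y ^ t - 1) / (y - 1) :=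
      kantor_slope_le t ht hx0 (ne_of_lt hxlt) (ne_of_lt hylt) hxy
    have h1 : K y t * s0 ^ t ≤ K x t * s0 ^ t := by
      rw [hEqy]
      refine le_trans ?_ (hIneqx s0 hs0.le)
      have := mul_le_mul_of_nonpos_right hslope (by linarith : s0 - 1 ≤ 0)
      linarith
    exact le_of_mul_le_mul_right h1 (Real.rpow_pos_of_pos hs0 t)
  · -- monotone on (1,∞)
    intro x hxm y hym hxy
    simp only
    rw [Set.mem_Ioi] at hxm hym
    obtain ⟨s0, hs0, hEqx, -, hge1, -⟩ := kantor_key t ht x (by linarith) (ne_of_gt hxm)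
    obtain ⟨-, -, -, hIneqy, -, -⟩ := kantor_key t ht y (by linarith) (ne_of_gt hym)
    have hs01 : 1 ≤ s0 := hge1 hxm
    have hslope : (x ^ t - 1) / (x - 1) ≤ (y ^ t - 1) / (y - 1) :=
      kantor_slope_le t ht (by linarith) (ne_of_gt hxm) (ne_of_gt hym) hxy
    have h1 : K x t * s0 ^ t ≤ K y t * s0 ^ t := by
      rw [hEqx]
      refine le_trans ?_ (hIneqy s0 hs0.le)
      have := mul_le_mul_of_nonneg_right hslope (by linarith : 0 ≤ s0 - 1)
      linarith
    exact le_of_mul_le_mul_right h1 (Real.rpow_pos_of_pos hs0 t)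
  · intro x hx hx1
    obtain ⟨s0, hs0, hEq, hIneq, -, -⟩ := kantor_key t ht x hx hx1
    have h := hIneq 1 zero_le_one
    simpa [Real.one_rpow] using h
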